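/- Let A be an associative unital ℂ-algebra, ℏ ∈ ℂ, n a positive integer, and let Xⁱ_j ∈ A (1 ≤ i,j ≤ n) be any elements. Let M be a left A-module (a ℂ-vector space with compatible A-action) and v ∈ M a vector such that Xⁱ_j·v = 0 whenever i < j and X^k_k·v = μ_k·v for scalars μ_k ∈ ℂ (1 ≤ k ≤ n). Then for every u ∈ ℂ the Capelli determinant C(X,u) := Σ_{σ ∈ S_n} sgn(σ) ∏_{k=1}^{n} ((u − (n−k)ℏ)·δ^{σ(k)}_k·1_A − X^{σ(k)}_k), with the product taken in increasing order of k from left to right, satisfies C(X,u)·v = ∏_{k=1}^{n} (u − (n−k)ℏ − μ_k)·v. -/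

import Mathlib

/-- The Capelli determinant
`C(X,u) := Σ_{σ ∈ S_n} sgn(σ) ∏_{k=1}^{n} ((u − (n−k)ℏ)·δ^{σ(k)}_k·1_A − X^{σ(k)}_k)`,
with the (noncommutative) product taken in increasing order of `k` from left to right.
Here the index `k : Fin n` corresponds to the math index `k+1 ∈ {1,…,n}`, so the scalar
factor is `u − (n−1−k)ℏ`. -/
noncomputable def capelli {A : Type*} [Ring A] [Algebra ℂ A] {n : ℕ}
    (X : Fin n → Fin n → A) (u ℏ : ℂ) : A :=
  ∑ σ : Equiv.Perm (Fin n),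
    (Equiv.Perm.sign σ : ℤ) •
      (List.ofFn (fun k : Fin n =>
        (if σ k = k then algebraMap ℂ A (u - ((n : ℂ) - 1 - (k : ℕ)) * ℏ) else 0)
          - X (σ k) k)).prod

section Aux
variable {A : Type*} [Ring A] [Algebra ℂ A]
    {M : Type*} [AddCommGroup M] [Module ℂ M] [Module A M] [IsScalarTower ℂ A M]

lemma comm_smul' (a : A) (s : ℂ) (w : M) : a • (s • w) = s • (a • w) := by
  rw [← algebraMap_smul A s w, ← mul_smul, ← Algebra.commutes, mul_smul, algebraMap_smul]

lemma diag_prod (v : M) : ∀ {n : ℕ} (g : Fin n → A) (c : Fin n → ℂ),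
    (∀ k, g k • v = c k • v) →
    (List.ofFn g).prod • v = (∏ k, c k) • v := by
  intro n
  induction n with
  | zero => intro g c _; simp
  | succ m ih =>
    intro g c h
    rw [List.ofFn_succ, List.prod_cons, mul_smul,
      ih (fun k => g k.succ) (fun k => c k.succ) (fun k => h k.succ),
      comm_smul', h 0, ← mul_smul, Fin.prod_univ_succ, mul_comm]

lemma kill_prod (v : M) : ∀ {n : ℕ} (g : Fin n → A) (k : Fin n),
    g k • v = 0 → (∀ j, k < j → ∃ c : ℂ, g j • v = c • v) →
    (List.ofFn g).prod • v = 0 := by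
  intro n
  induction n with
  | zero => intro g k; exact absurd k.2 (by simp)
  | succ m ih =>
    intro g k hk hdiag
    rw [List.ofFn_succ, List.prod_cons, mul_smul]
    rcases Fin.eq_zero_or_eq_succ k with rfl | ⟨k', rfl⟩
    · have hd : ∀ j : Fin m, (g j.succ) • v =
          (Classical.choose (hdiag j.succ (Fin.succ_pos j))) • v :=
        fun j => Classical.choose_spec (hdiag j.succ (Fin.succ_pos j))
      rw [diag_prod v _ _ hd, comm_smul', hk, smul_zero]
    · rw [ih (fun j => g j.succ) k' hk
        (fun j hj => hdiag j.succ (by simpa using hj)), smul_zero]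

end Aux

/-- If `v` is a highest weight vector for the `Xⁱ_j` (killed by the `Xⁱ_j` with `i < j`,
eigenvector of the `X^k_k` with eigenvalues `μ_k`), then the Capelli determinant acts on `v`
by `C(X,u)·v = ∏_{k=1}^{n} (u − (n−k)ℏ − μ_k)·v`. -/
theorem stmt_6 {A : Type*} [Ring A] [Algebra ℂ A] {n : ℕ} (hn : 0 < n)
    (ℏ : ℂ) (X : Fin n → Fin n → A)
    {M : Type*} [AddCommGroup M] [Module ℂ M] [Module A M] [IsScalarTower ℂ A M]
    (v : M) (μ : Fin n → ℂ)
    (hup : ∀ i j : Fin n, i < j → X i j • v = 0)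
    (hdiag : ∀ k : Fin n, X k k • v = μ k • v) :
    ∀ u : ℂ, capelli X u ℏ • v =
      (∏ k : Fin n, (u - ((n : ℂ) - 1 - (k : ℕ)) * ℏ - μ k)) • v := by
  intro u
  unfold capelli
  rw [Finset.sum_smul]
  rw [Finset.sum_eq_single (1 : Equiv.Perm (Fin n))]
  · simp only [Equiv.Perm.sign_one, Units.val_one, one_smul, Equiv.Perm.one_apply, if_true]
    exact diag_prod v _ _ (fun k => by
      rw [sub_smul, algebraMap_smul, hdiag k, ← sub_smul])
  · intro σ _ hσ
    have hne : {k : Fin n | σ k ≠ k}.Nonempty := by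
      by_contra h
      rw [Set.not_nonempty_iff_eq_empty] at h
      refine hσ (Equiv.ext fun x => ?_)
      have : x ∉ ({k : Fin n | σ k ≠ k} : Set (Fin n)) := by rw [h]; exact Set.notMem_empty x
      simpa using this
    obtain ⟨k, hk, hmax0⟩ := Set.Finite.exists_maximal (Set.toFinite _) hne
    have hmax : ∀ j ∈ {k : Fin n | σ k ≠ k}, k ≤ j → k = j :=
      fun j hj hkj => le_antisymm hkj (hmax0 hj hkj)
    have hfix : ∀ j, k < j → σ j = j := by
      intro j hj
      by_contra hj'
      exact hj.ne (hmax j hj' hj.le)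
    have hlt : σ k < k := by
      rcases lt_trichotomy (σ k) k with h | h | h
      · exact h
      · exact absurd h hk
      · exact absurd (σ.injective (hfix (σ k) h)) (fun e => hk e)
    have hzero : ((if σ k = k then algebraMap ℂ A (u - ((n : ℂ) - 1 - (k : ℕ)) * ℏ) else 0)
        - X (σ k) k) • v = 0 := by
      rw [if_neg hk, zero_sub, neg_smul, hup _ _ hlt, neg_zero]
    have hz := kill_prod v (fun k : Fin n =>
        (if σ k = k then algebraMap ℂ A (u - ((n : ℂ) - 1 - (k : ℕ)) * ℏ) else 0)
          - X (σ k) k) k hzero (fun j hj => ⟨u - ((n : ℂ) - 1 - (j : ℕ)) * ℏ - μ j, by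
      show ((if σ j = j then _ else 0) - X (σ j) j) • v = _
      rw [sub_smul, if_pos (hfix j hj), algebraMap_smul, hfix j hj, hdiag j, ← sub_smul]⟩)
    rw [zsmul_eq_mul, mul_smul, hz, smul_zero]
  · intro h; exact absurd (Finset.mem_univ _) h
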